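/- The subgroup Γ_C of SL(2,ℝ) generated by {M(α(n,k), r(n)) : n ≥ 1, 0 ≤ k ≤ 2^(n−1)−1} is a discrete subgroup, i.e., Γ_C with the topology induced from SL(2,ℝ) is a discrete topological space. -/

import Mathlib

open UpperHalfPlane MatrixGroups

noncomputable section

/-- `s k = Σᵢ 2·tᵢ·3ⁱ` where `k = Σᵢ tᵢ·2ⁱ` is the binary expansion of `k`;
equivalently `s 0 = 0`, `s (2j) = 3·(s j)`, `s (2j+1) = 3·(s j) + 2`. -/
def s : ℕ → ℕ
  | 0 => 0
  | k + 1 =>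
    if (k + 1) % 2 = 0 then 3 * s ((k + 1) / 2)
    else 3 * s ((k + 1) / 2) + 2
decreasing_by all_goals (simp_wf; omega)

lemma s_eq (k : ℕ) : s k = 3 * s (k / 2) + 2 * (k % 2) := by
  match k with
  | 0 => simp [s]
  | k + 1 =>
    rw [s]
    by_cases h : (k + 1) % 2 = 0
    · simp [h]
    · have h1 : (k + 1) % 2 = 1 := by omega
      simp [h, h1]

lemma s_mod3 (k : ℕ) : s k % 3 = 2 * (k % 2) := by rw [s_eq]; omega

lemma s_div3 (k : ℕ) : s k / 3 = s (k / 2) := by rw [s_eq]; omega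

lemma s_div_pow (p k : ℕ) : s k / 3 ^ p = s (k / 2 ^ p) := by
  induction p generalizing k with
  | zero => simp
  | succ p ih =>
    rw [show (3:ℕ) ^ (p+1) = 3 * 3 ^ p by ring, ← Nat.div_div_eq_div_mul, s_div3, ih,
      Nat.div_div_eq_div_mul]
    congr 1
    ring

lemma s_ne_one_mod (k : ℕ) : s k % 3 ≠ 1 := by rw [s_mod3]; omega

lemma s_inj_aux : ∀ n a b : ℕ, a + b ≤ n → s a = s b → a = b := by
  intro n
  induction n with
  | zero => intro a b h _; omega
  | succ n ih =>
    intro a b hab h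
    have hm : a % 2 = b % 2 := by
      have h1 := s_mod3 a; have h2 := s_mod3 b; omega
    have hd : s (a / 2) = s (b / 2) := by
      have h1 := s_div3 a; have h2 := s_div3 b; omega
    rcases Nat.eq_zero_or_pos a with rfl | ha
    · rcases Nat.eq_zero_or_pos b with rfl | hb
      · rfl
      · have : (0:ℕ) / 2 = b / 2 := ih (0/2) (b/2) (by omega) hd
        omega
    · rcases Nat.eq_zero_or_pos b with rfl | hb
      · have : a / 2 = 0 / 2 := ih (a/2) (0/2) (by omega) hd
        omega
      · have : a / 2 = b / 2 := ih (a/2) (b/2) (by omega) hd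
        omega

lemma s_inj : Function.Injective s := fun a b h => s_inj_aux (a + b) a b le_rfl h

lemma core (p a j : ℕ) (hp : 1 ≤ p) :
    6 * s j + 3 + 3 ^ p + 1 ≤ (6 * a + 3) * 3 ^ p ∨
      (6 * a + 3) * 3 ^ p + 3 ^ p + 1 ≤ 6 * s j + 3 := by
  by_contra hc
  push_neg at hc
  obtain ⟨h1, h2⟩ := hc
  have ht0 : 0 < 3 ^ p := Nat.pow_pos (by norm_num)
  have htu : (6 * a + 3) * 3 ^ p = 2 * (3 ^ p * (3 * a + 1)) + 3 ^ p := by ring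
  rw [htu] at h1 h2
  set t := 3 ^ p with ht
  set e := s j with he
  set u := t * (3 * a + 1) with hu
  have hu1 : u ≤ 3 * e + 1 := by omega
  have hu2 : 3 * e + 2 ≤ u + t := by omega
  have hdiv : (3 * e + 1) / t = 3 * a + 1 := by
    rw [show 3 * e + 1 = t * (3 * a + 1) + (3 * e + 1 - u) by omega]
    rw [Nat.mul_add_div ht0]
    have : (3 * e + 1 - u) / t = 0 := Nat.div_eq_of_lt (by omega)
    omega
  have hdiv2 : (3 * e + 1) / t = e / 3 ^ (p - 1) := by
    rw [ht, show (3:ℕ) ^ p = 3 * 3 ^ (p - 1) by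
      rw [← pow_succ']; congr 1; omega]
    rw [← Nat.div_div_eq_div_mul]
    congr 1
    omega
  have hs : e / 3 ^ (p - 1) = s (j / 2 ^ (p - 1)) := s_div_pow (p-1) j
  have := s_ne_one_mod (j / 2 ^ (p - 1))
  omega

lemma key_int_lt {n m : ℕ} (k j : ℕ) (hlt : n < m) :
    (3:ℤ) ^ n + 3 ^ m ≤ |(6 * (s k : ℤ) + 3) * 3 ^ m - (6 * (s j : ℤ) + 3) * 3 ^ n| := by
  set p := m - n with hp
  have hcore := core p (s k) j (by omega)
  have hpm : (3:ℤ) ^ p * 3 ^ n = 3 ^ m := by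
    rw [← pow_add]; congr 1; omega
  have h3n : (0:ℤ) ≤ 3 ^ n := by positivity
  rcases hcore with h | h
  · refine le_abs.mpr (Or.inl ?_)
    have h' : ((6 * (s j : ℤ) + 3) + 3 ^ p + 1) * 3 ^ n ≤ ((6 * (s k : ℤ) + 3) * 3 ^ p) * 3 ^ n := by
      have := mul_le_mul_of_nonneg_right (by exact_mod_cast h :
        (6 * (s j : ℤ) + 3 + 3 ^ p + 1 : ℤ) ≤ (6 * (s k : ℤ) + 3) * 3 ^ p) h3n
      linarith
    rw [mul_assoc, hpm] at h'
    nlinarith [hpm, pow_pos (show (0:ℤ) < 3 by norm_num) n]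
  · refine le_abs.mpr (Or.inr ?_)
    have h' : ((6 * (s k : ℤ) + 3) * 3 ^ p + 3 ^ p + 1) * 3 ^ n ≤ (6 * (s j : ℤ) + 3) * 3 ^ n := by
      have := mul_le_mul_of_nonneg_right (by exact_mod_cast h :
        ((6 * (s k : ℤ) + 3) * 3 ^ p + 3 ^ p + 1 : ℤ) ≤ 6 * (s j : ℤ) + 3) h3n
      linarith
    have h'' : (6 * (s k : ℤ) + 3) * 3 ^ p * 3 ^ n = (6 * (s k : ℤ) + 3) * 3 ^ m := by
      rw [mul_assoc, hpm]
    nlinarith [pow_pos (show (0:ℤ) < 3 by norm_num) n]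

lemma key_int (n k m j : ℕ) (h : (n, k) ≠ (m, j)) :
    (3:ℤ) ^ n + 3 ^ m ≤ |(6 * (s k : ℤ) + 3) * 3 ^ m - (6 * (s j : ℤ) + 3) * 3 ^ n| := by
  rcases Nat.lt_trichotomy n m with hlt | rfl | hlt
  · exact key_int_lt k j hlt
  · have hkj : k ≠ j := by simpa using h
    have hs : (s k : ℤ) ≠ (s j : ℤ) := by
      exact_mod_cast fun hh => hkj (s_inj hh)
    have h1 : (1:ℤ) ≤ |(s k : ℤ) - (s j : ℤ)| := Int.one_le_abs (sub_ne_zero.mpr hs)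
    have : (6 * (s k : ℤ) + 3) * 3 ^ n - (6 * (s j : ℤ) + 3) * 3 ^ n
        = 6 * ((s k : ℤ) - (s j : ℤ)) * 3 ^ n := by ring
    rw [this, abs_mul, abs_mul]
    have h3 : |(3:ℤ) ^ n| = 3 ^ n := abs_of_nonneg (by positivity)
    rw [h3]
    have : (6:ℤ) ≤ |(6:ℤ)| * |(s k : ℤ) - (s j : ℤ)| := by
      rw [abs_of_nonneg (by norm_num : (0:ℤ) ≤ 6)]; nlinarith
    nlinarith [pow_pos (show (0:ℤ) < 3 by norm_num) n]
  · have := key_int_lt (n := m) (m := n) j k hlt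
    rw [abs_sub_comm] at this
    linarith


/-- The midpoint of the middle third removed at stage `n` from the `k`-th interval of
stage `n−1` of the middle-thirds construction on `[1,2]`. -/
def alphaC (n k : ℕ) : ℝ := 1 + (3 * s k + 1) / 3 ^ n + 1 / (2 * 3 ^ n)

/-- The common radius of the half-circles at stage `n`. -/
def radC (n : ℕ) : ℝ := 1 / (4 * 3 ^ n)

lemma radC_ne (n : ℕ) : radC n ≠ 0 := by unfold radC; positivity

lemma radC_pos (n : ℕ) : 0 < radC n := by unfold radC; positivity

lemma radC_le (n : ℕ) : radC n ≤ 1 / 4 := by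
  unfold radC
  rw [div_le_div_iff₀ (by positivity) (by norm_num)]
  have : (1:ℝ) ≤ 3 ^ n := one_le_pow₀ (by norm_num)
  nlinarith

lemma one_lt_alphaC (n k : ℕ) : 1 < alphaC n k := by
  unfold alphaC
  have h1 : (0:ℝ) < (3 * s k + 1) / 3 ^ n := by positivity
  have h2 : (0:ℝ) < 1 / (2 * 3 ^ n) := by positivity
  linarith

lemma alphaC_sep {n k m j : ℕ} (h : (n, k) ≠ (m, j)) :
    radC n + radC m < |alphaC n k - alphaC m j| := by
  have h3n : (0:ℝ) < 3 ^ n := by positivity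
  have h3m : (0:ℝ) < 3 ^ m := by positivity
  have hdiff : alphaC n k - alphaC m j =
      ((6 * (s k : ℝ) + 3) * 3 ^ m - (6 * (s j : ℝ) + 3) * 3 ^ n) / (2 * (3 ^ n * 3 ^ m)) := by
    unfold alphaC
    field_simp
    ring
  have hkey : (3:ℝ) ^ n + 3 ^ m ≤ |(6 * (s k : ℝ) + 3) * 3 ^ m - (6 * (s j : ℝ) + 3) * 3 ^ n| := by
    have := key_int n k m j h
    calc (3:ℝ) ^ n + 3 ^ m = ((3 ^ n + 3 ^ m : ℤ) : ℝ) := by push_cast; ring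
    _ ≤ ((|(6 * (s k : ℤ) + 3) * 3 ^ m - (6 * (s j : ℤ) + 3) * 3 ^ n| : ℤ) : ℝ) := by
        exact_mod_cast key_int n k m j h
    _ = |(6 * (s k : ℝ) + 3) * 3 ^ m - (6 * (s j : ℝ) + 3) * 3 ^ n| := by
        rw [Int.cast_abs]; push_cast; ring_nf
  rw [hdiff, abs_div]
  have hden : |2 * ((3:ℝ) ^ n * 3 ^ m)| = 2 * (3 ^ n * 3 ^ m) := abs_of_pos (by positivity)
  rw [hden]
  rw [lt_div_iff₀ (by positivity)]
  unfold radC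
  have expand : (1 / (4 * 3 ^ n) + 1 / (4 * 3 ^ m)) * (2 * ((3:ℝ) ^ n * 3 ^ m))
      = (3 ^ m + 3 ^ n) / 2 := by field_simp; ring
  rw [expand]
  calc ((3:ℝ) ^ m + 3 ^ n) / 2 < 3 ^ n + 3 ^ m := by nlinarith
  _ ≤ _ := hkey


/-- `N(β,β',r)` is the element of `SL(2,ℝ)` whose Möbius transformation has isometric circle
the half-circle of radius `r` centered at `β`, mapped onto the half-circle of radius `r`
centered at `β'`. -/
def Nmat (β β' r : ℝ) (hr : r ≠ 0) : SL(2, ℝ) :=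
  ⟨!![β' / r, -(β * β' + r ^ 2) / r; 1 / r, -β / r], by
    rw [Matrix.det_fin_two_of]; field_simp; ring⟩

/-- `M(α,r) := N(α, −α, r)`. -/
def Mmat (a r : ℝ) (hr : r ≠ 0) : SL(2, ℝ) := Nmat a (-a) r hr

lemma coe_smul_SL (g : SL(2, ℝ)) (z : ℍ) :
    (↑(g • z) : ℂ) = ((g 0 0 : ℝ) * z + ((g 0 1 : ℝ) : ℂ)) /
      ((g 1 0 : ℝ) * z + ((g 1 1 : ℝ) : ℂ)) := by
  rw [UpperHalfPlane.specialLinearGroup_apply]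
  simp [UpperHalfPlane.coe_mk]

lemma denom_ne_SL (g : SL(2, ℝ)) (z : ℍ) :
    ((g 1 0 : ℝ) : ℂ) * z + ((g 1 1 : ℝ) : ℂ) ≠ 0 := by
  have hrow : ![g 1 0, g 1 1] ≠ 0 := by
    intro hc
    have h0 : g 1 0 = 0 := congrFun hc 0
    have h1 : g 1 1 = 0 := congrFun hc 1
    have hdet := g.2
    rw [Matrix.det_fin_two] at hdet
    rw [h0, h1] at hdet
    simp at hdet
  simpa using UpperHalfPlane.linear_ne_zero z hrow

lemma Mmat_entry00 (a r : ℝ) (hr : r ≠ 0) : (Mmat a r hr) 0 0 = -a / r := rfl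
lemma Mmat_entry01 (a r : ℝ) (hr : r ≠ 0) : (Mmat a r hr) 0 1 = -(a * (-a) + r ^ 2) / r := rfl
lemma Mmat_entry10 (a r : ℝ) (hr : r ≠ 0) : (Mmat a r hr) 1 0 = 1 / r := rfl
lemma Mmat_entry11 (a r : ℝ) (hr : r ≠ 0) : (Mmat a r hr) 1 1 = -a / r := rfl

lemma Mmat_smul_id (a r : ℝ) (hr : r ≠ 0) (z : ℍ) :
    ((↑(Mmat a r hr • z) : ℂ) + a) * ((z : ℂ) - a) = -((r : ℂ) ^ 2) := by
  have hden := denom_ne_SL (Mmat a r hr) z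
  rw [Mmat_entry10, Mmat_entry11] at hden
  have hza : (z : ℂ) - a ≠ 0 := by
    intro hc
    have := congrArg Complex.im hc
    simp [UpperHalfPlane.coe_im] at this
    exact z.im_ne_zero this
  have hrc : (r : ℂ) ≠ 0 := Complex.ofReal_ne_zero.mpr hr
  have hW := coe_smul_SL (Mmat a r hr) z
  rw [Mmat_entry00, Mmat_entry01, Mmat_entry10, Mmat_entry11] at hW
  rw [eq_div_iff hden] at hW
  push_cast at hW
  set W := (↑(Mmat a r hr • z) : ℂ) with hWdef
  have hW2 : W * ((z : ℂ) - a) = -a * z + a * a - r ^ 2 := by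
    have hDr : ((1:ℂ)/r * z + -a/r) * r = (z : ℂ) - a := by
      field_simp
      ring
    calc W * ((z : ℂ) - a) = W * (((1:ℂ)/r * z + -a/r) * r) := by rw [hDr]
    _ = (W * ((1:ℂ)/r * z + -a/r)) * r := by ring
    _ = (-a/r * z + -(a * -a + r ^ 2)/r) * r := by rw [← hW]
    _ = -a * z + a * a - r ^ 2 := by field_simp; ring
  linear_combination hW2

lemma Mmat_abs (a r : ℝ) (hr : 0 < r) (z : ℍ) :
    ‖(↑(Mmat a r hr.ne' • z) : ℂ) + a‖ * ‖(z : ℂ) - a‖ = r ^ 2 := by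
  rw [← norm_mul, Mmat_smul_id]
  rw [norm_neg]
  rw [norm_pow]
  rw [Complex.norm_real, Real.norm_eq_abs, abs_of_pos hr]

lemma Mmat_inv_abs (a r : ℝ) (hr : 0 < r) (z : ℍ) :
    ‖(↑((Mmat a r hr.ne')⁻¹ • z) : ℂ) - a‖ * ‖(z : ℂ) + a‖ = r ^ 2 := by
  set w := (Mmat a r hr.ne')⁻¹ • z with hw
  have hmw : Mmat a r hr.ne' • w = z := by
    rw [hw, smul_smul, mul_inv_cancel, one_smul]
  have h1 := Mmat_smul_id a r hr.ne' w
  rw [hmw] at h1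
  have h2 : ((w : ℂ) - a) * ((z : ℂ) + a) = -((r:ℂ) ^ 2) := by linear_combination h1
  rw [← norm_mul, h2, norm_neg, norm_pow, Complex.norm_real, Real.norm_eq_abs, abs_of_pos hr]

lemma push_lemma (a r : ℝ) (hr : 0 < r) (b : Bool) (z : ℍ)
    (h : r < ‖(z : ℂ) - (if b then (a : ℂ) else -(a : ℂ))‖) :
    ‖(↑((if b then Mmat a r hr.ne' else (Mmat a r hr.ne')⁻¹) • z) : ℂ)
      - (if b then -(a : ℂ) else (a : ℂ))‖ < r := by
  cases b
  · simp only [if_neg Bool.false_ne_true, Bool.false_eq_true, if_false] at h ⊢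
    have key := Mmat_inv_abs a r hr z
    have hz : (z : ℂ) - -(a : ℂ) = (z : ℂ) + a := by ring
    rw [hz] at h
    have hY : (0:ℝ) < ‖(z : ℂ) + a‖ := lt_trans hr h
    nlinarith [key]
  · simp only [if_true] at h ⊢
    rw [sub_neg_eq_add]
    have key := Mmat_abs a r hr z
    have hz : (0:ℝ) < ‖(z : ℂ) - a‖ := lt_trans hr h
    nlinarith [key]


/-- The subgroup of `SL(2,ℝ)` generated by the `M(α(n,k), r(n))`. -/
def ΓC : Subgroup SL(2, ℝ) :=
  Subgroup.closure
    {g | ∃ n k : ℕ, 1 ≤ n ∧ k < 2 ^ (n - 1) ∧ g = Mmat (alphaC n k) (radC n) (radC_ne n)}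

def Idx : Type := {p : ℕ × ℕ // 1 ≤ p.1 ∧ p.2 < 2 ^ (p.1 - 1)}

instance : DecidableEq Idx := by unfold Idx; infer_instance

def gen (i : Idx) : SL(2, ℝ) := Mmat (alphaC i.1.1 i.1.2) (radC i.1.1) (radC_ne i.1.1)

/-- group element of a letter -/
def F (x : Idx × Bool) : SL(2, ℝ) := if x.2 then gen x.1 else (gen x.1)⁻¹

/-- target disc center of a letter -/
def tc (x : Idx × Bool) : ℝ :=
  if x.2 then -(alphaC x.1.1.1 x.1.1.2) else alphaC x.1.1.1 x.1.1.2

/-- disc radius of a letter -/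
def rc (x : Idx × Bool) : ℝ := radC x.1.1.1

lemma rc_pos (x : Idx × Bool) : 0 < rc x := radC_pos _
lemma rc_le (x : Idx × Bool) : rc x ≤ 1 / 4 := radC_le _

/-- the mapping lemma in letter form -/
lemma push' (x : Idx × Bool) (z : ℍ)
    (h : rc x < ‖(z : ℂ) + (tc x : ℝ)‖) :
    ‖(↑(F x • z) : ℂ) - (tc x : ℝ)‖ < rc x := by
  have := push_lemma (alphaC x.1.1.1 x.1.1.2) (radC x.1.1.1) (radC_pos x.1.1.1) x.2 z
  cases hx : x.2
  · rw [hx] at this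
    simp only [Bool.false_eq_true, if_false] at this
    unfold F tc rc at *
    rw [hx] at h ⊢
    simp only [Bool.false_eq_true, if_false] at h ⊢
    apply this
    have : (z : ℂ) - -(alphaC x.1.1.1 x.1.1.2 : ℂ) = (z : ℂ) + (alphaC x.1.1.1 x.1.1.2 : ℝ) := by
      push_cast; ring
    rw [this]
    exact h
  · rw [hx] at this
    simp only [if_true] at this
    unfold F tc rc at *
    rw [hx] at h ⊢
    simp only [if_true] at h ⊢
    have h2 : (z : ℂ) + ((-(alphaC x.1.1.1 x.1.1.2) : ℝ) : ℂ)
        = (z : ℂ) - (alphaC x.1.1.1 x.1.1.2 : ℂ) := by push_cast; ring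
    rw [h2] at h
    have h3 := this h
    have h4 : (↑(gen x.1 • z) : ℂ) - ((-(alphaC x.1.1.1 x.1.1.2) : ℝ) : ℂ)
        = (↑(gen x.1 • z) : ℂ) - -(alphaC x.1.1.1 x.1.1.2 : ℂ) := by push_cast; ring
    rw [h4]
    exact h3

lemma sep' (a b : Idx × Bool) (h : a.1 ≠ b.1 ∨ a.2 = b.2) :
    rc a + rc b < |(-(tc a)) - tc b| := by
  have hne : ∀ (i j : Idx), i ≠ j →
      rc a + rc b < |alphaC i.1.1 i.1.2 - alphaC j.1.1 j.1.2| →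
      True := fun _ _ _ _ => trivial
  have h1a := one_lt_alphaC a.1.1.1 a.1.1.2
  have h1b := one_lt_alphaC b.1.1.1 b.1.1.2
  have hra := rc_le a
  have hrb := rc_le b
  have hrap := rc_pos a
  have hrbp := rc_pos b
  have hcantor : a.1 ≠ b.1 →
      rc a + rc b < |alphaC a.1.1.1 a.1.1.2 - alphaC b.1.1.1 b.1.1.2| := by
    intro hab
    have : (a.1.1.1, a.1.1.2) ≠ (b.1.1.1, b.1.1.2) := by
      intro hc
      apply hab
      apply Subtype.ext
      exact Prod.ext (congrArg Prod.fst hc) (congrArg Prod.snd hc)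
    exact alphaC_sep this
  unfold tc
  cases ha : a.2 <;> cases hb : b.2 <;>
    simp only [Bool.false_eq_true, if_true, if_false]
  · -- a false, b false : -tc a = -α₁, tc b = α₂ ; dist = α₁ + α₂
    rw [show -alphaC a.1.1.1 a.1.1.2 - alphaC b.1.1.1 b.1.1.2
        = -(alphaC a.1.1.1 a.1.1.2 + alphaC b.1.1.1 b.1.1.2) by ring, abs_neg,
      abs_of_pos (by linarith)]
    linarith
  · -- a false, b true : -tc a = -α₁, tc b = -α₂ ; dist = |α₂ - α₁| ; need a.1 ≠ b.1
    have hab : a.1 ≠ b.1 := by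
      rcases h with h | h
      · exact h
      · rw [ha, hb] at h; exact absurd h (by simp)
    have := hcantor hab
    rw [show -alphaC a.1.1.1 a.1.1.2 - -alphaC b.1.1.1 b.1.1.2
        = -(alphaC a.1.1.1 a.1.1.2 - alphaC b.1.1.1 b.1.1.2) by ring, abs_neg]
    exact this
  · -- a true, b false : -tc a = α₁, tc b = α₂ ; need a.1 ≠ b.1
    have hab : a.1 ≠ b.1 := by
      rcases h with h | h
      · exact h
      · rw [ha, hb] at h; exact absurd h (by simp)
    have := hcantor hab
    rw [neg_neg]
    exact this
  · -- a true, b true : dist = α₁ + α₂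
    rw [neg_neg]
    rw [show alphaC a.1.1.1 a.1.1.2 - -alphaC b.1.1.1 b.1.1.2
        = alphaC a.1.1.1 a.1.1.2 + alphaC b.1.1.1 b.1.1.2 by ring,
      abs_of_pos (by linarith)]
    linarith

abbrev Rnc : (Idx × Bool) → (Idx × Bool) → Prop := fun a b => ¬(a.1 = b.1 ∧ a.2 ≠ b.2)

lemma word_lemma : ∀ (L : List (Idx × Bool)), L.IsChain Rnc → ∀ x t, L = x :: t →
    ‖(↑(((L.map F).prod) • UpperHalfPlane.I) : ℂ) - (tc x : ℝ)‖ < rc x := by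
  intro L
  induction L with
  | nil => intro _ x t h; exact absurd h (by simp)
  | cons a t ih =>
    intro hC x t' hx
    obtain ⟨rfl, rfl⟩ : a = x ∧ t = t' := by
      constructor <;> injection hx <;> assumption
    have prodeq : (((a :: t).map F)).prod = F a * ((t.map F)).prod := by simp
    rw [prodeq, mul_smul]
    cases t with
    | nil =>
      simp only [List.map_nil, List.prod_nil, one_smul]
      apply push'
      have him : (1:ℝ) ≤ ‖(UpperHalfPlane.I : ℂ) + (tc a : ℝ)‖ := by
        have h1 : ((UpperHalfPlane.I : ℂ) + (tc a : ℝ)).im = 1 := by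
          simp [UpperHalfPlane.I]
        calc (1:ℝ) = |((UpperHalfPlane.I : ℂ) + (tc a : ℝ)).im| := by rw [h1]; norm_num
        _ ≤ ‖(UpperHalfPlane.I : ℂ) + (tc a : ℝ)‖ := Complex.abs_im_le_norm _
      have := rc_le a
      linarith
    | cons b t2 =>
      have hC' : List.IsChain Rnc (b :: t2) := hC.tail
      have hR : Rnc a b := (List.isChain_cons_cons.mp hC).1
      have IH := ih hC' b t2 rfl
      set z : ℍ := (((b :: t2).map F)).prod • UpperHalfPlane.I with hz
      apply push'
      have hsep := sep' a b (by
        by_cases h1 : a.1 = b.1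
        · right
          by_contra h2
          exact hR ⟨h1, h2⟩
        · exact Or.inl h1)
      set D : ℝ := (-(tc a)) - tc b with hD
      have habsD : ‖((D : ℝ) : ℂ)‖ = |D| := by rw [Complex.norm_real, Real.norm_eq_abs]
      have tri : ‖((D : ℝ) : ℂ)‖ ≤
          ‖(z : ℂ) + (tc a : ℝ)‖ + ‖(z : ℂ) - (tc b : ℝ)‖ := by
        have heq : ((D : ℝ) : ℂ) = -((z : ℂ) + (tc a : ℝ)) + ((z : ℂ) - (tc b : ℝ)) := by
          rw [hD]; push_cast; ring
        rw [heq]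
        calc ‖-((z : ℂ) + (tc a : ℝ)) + ((z : ℂ) - (tc b : ℝ))‖
            ≤ ‖-((z : ℂ) + (tc a : ℝ))‖ + ‖(z : ℂ) - (tc b : ℝ)‖ :=
              norm_add_le _ _
        _ = ‖(z : ℂ) + (tc a : ℝ)‖ + ‖(z : ℂ) - (tc b : ℝ)‖ := by
              rw [norm_neg]
      rw [habsD] at tri
      linarith

lemma not_chain'_decomp {α : Type*} {R : α → α → Prop} :
    ∀ L : List α, ¬ L.IsChain R → ∃ L1 a b L2, L = L1 ++ a :: b :: L2 ∧ ¬ R a b := by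
  intro L
  induction L with
  | nil => intro h; exact absurd List.isChain_nil h
  | cons a t ih =>
    intro h
    cases t with
    | nil => exact absurd (List.isChain_singleton a) h
    | cons b t2 =>
      by_cases hR : R a b
      · have h2 : ¬ List.IsChain R (b :: t2) := by
          intro hc
          exact h (List.isChain_cons_cons.mpr ⟨hR, hc⟩)
        obtain ⟨L1, c, d, L2, hEq, hcd⟩ := ih h2
        exact ⟨a :: L1, c, d, L2, by rw [List.cons_append, hEq], hcd⟩
      · exact ⟨[], a, b, t2, rfl, hR⟩

lemma chain'_toWord {α : Type*} [DecidableEq α] (x : FreeGroup α) :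
    x.toWord.IsChain (fun a b => ¬(a.1 = b.1 ∧ a.2 ≠ b.2)) := by
  by_contra hc
  obtain ⟨L1, a, b, L2, hEq, hab⟩ := not_chain'_decomp _ hc
  push_neg at hab
  obtain ⟨h1, h2⟩ := hab
  have hb : b = (a.1, !a.2) := by
    have : b.2 = !a.2 := by
      cases ha2 : a.2 <;> cases hb2 : b.2 <;> simp_all
    exact Prod.ext h1.symm this
  rw [hb] at hEq
  have hred : FreeGroup.reduce x.toWord = x.toWord := FreeGroup.reduce_toWord x
  rw [hEq] at hred
  exact FreeGroup.reduce.not hred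

lemma gamma_range {γ : SL(2, ℝ)} (h : γ ∈ ΓC) :
    ∃ x : FreeGroup Idx, FreeGroup.lift gen x = γ := by
  have hrange : Set.range gen =
      {g | ∃ n k : ℕ, 1 ≤ n ∧ k < 2 ^ (n - 1) ∧ g = Mmat (alphaC n k) (radC n) (radC_ne n)} := by
    ext g
    constructor
    · rintro ⟨⟨⟨n, k⟩, hn, hk⟩, rfl⟩
      exact ⟨n, k, hn, hk, rfl⟩
    · rintro ⟨n, k, hn, hk, rfl⟩
      exact ⟨⟨(n, k), hn, hk⟩, rfl⟩
  have : ΓC = (FreeGroup.lift gen).range := by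
    rw [FreeGroup.range_lift_eq_closure, hrange]
    rfl
  rw [this] at h
  exact h

lemma lift_eq_prod (x : FreeGroup Idx) :
    FreeGroup.lift gen x = ((x.toWord.map F)).prod := by
  conv_lhs => rw [← FreeGroup.mk_toWord (x := x)]
  rw [FreeGroup.lift_mk]
  congr 1
  apply List.map_congr_left
  intro p _
  cases hp : p.2 <;> simp [F, hp]

lemma key_disc {γ : SL(2, ℝ)} (hγ : γ ∈ ΓC) (hne : γ ≠ 1) :
    ∃ c ρ : ℝ, ρ ≤ 1 / 4 ∧ ‖(↑(γ • UpperHalfPlane.I) : ℂ) - c‖ < ρ := by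
  obtain ⟨x, rfl⟩ := gamma_range hγ
  have hx : x ≠ 1 := by
    rintro rfl
    simp at hne
  have hw : x.toWord ≠ [] := by
    rw [ne_eq, FreeGroup.toWord_eq_nil_iff]
    exact hx
  obtain ⟨a, t, hat⟩ := List.exists_cons_of_ne_nil hw
  have hchain : x.toWord.IsChain Rnc := chain'_toWord x
  have hword := word_lemma x.toWord hchain a t hat
  rw [lift_eq_prod]
  exact ⟨tc a, rc a, rc_le a, hword⟩

lemma im_smul_I (γ : SL(2, ℝ)) :
    ((↑(γ • UpperHalfPlane.I) : ℂ)).im * ((γ 1 0) ^ 2 + (γ 1 1) ^ 2) = 1 := by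
  have hden := denom_ne_SL γ UpperHalfPlane.I
  have hI : (UpperHalfPlane.I : ℂ) = Complex.I := rfl
  rw [coe_smul_SL, hI] at *
  have hnormSq : Complex.normSq ((γ 1 0 : ℝ) * Complex.I + ((γ 1 1 : ℝ) : ℂ))
      = (γ 1 0) ^ 2 + (γ 1 1) ^ 2 := by
    simp [Complex.normSq_apply]
    ring
  rw [Complex.div_im, hnormSq]
  have hre1 : (((γ 0 0 : ℝ)) * Complex.I + ((γ 0 1 : ℝ) : ℂ)).im = γ 0 0 := by simp
  have hre2 : (((γ 1 0 : ℝ)) * Complex.I + ((γ 1 1 : ℝ) : ℂ)).re = γ 1 1 := by simp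
  have hre3 : (((γ 0 0 : ℝ)) * Complex.I + ((γ 0 1 : ℝ) : ℂ)).re = γ 0 1 := by simp
  have hre4 : (((γ 1 0 : ℝ)) * Complex.I + ((γ 1 1 : ℝ) : ℂ)).im = γ 1 0 := by simp
  rw [hre1, hre2, hre3, hre4]
  have hdet := γ.2
  rw [Matrix.det_fin_two] at hdet
  have hS : (γ 1 0) ^ 2 + (γ 1 1) ^ 2 ≠ 0 := by
    intro hc
    have h0 : γ 1 0 = 0 ∧ γ 1 1 = 0 := by constructor <;> nlinarith [sq_nonneg (γ 1 0), sq_nonneg (γ 1 1)]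
    rw [h0.1, h0.2] at hdet
    simp at hdet
  field_simp
  linear_combination hdet

lemma key_norm {γ : SL(2, ℝ)} (hγ : γ ∈ ΓC) (hne : γ ≠ 1) :
    4 ≤ (γ 1 0) ^ 2 + (γ 1 1) ^ 2 := by
  obtain ⟨c, ρ, hρ, habs⟩ := key_disc hγ hne
  set w : ℂ := (↑(γ • UpperHalfPlane.I) : ℂ) with hw
  have him : w.im < 1 / 4 := by
    have h1 : w.im = (w - c).im := by simp
    have h2 : (w - c).im ≤ |(w - c).im| := le_abs_self _
    have h3 : |(w - c).im| ≤ ‖w - c‖ := Complex.abs_im_le_norm _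
    linarith
  have heq := im_smul_I γ
  set S := (γ 1 0) ^ 2 + (γ 1 1) ^ 2 with hS
  have hS0 : 0 ≤ S := by positivity
  have hSne : S ≠ 0 := by intro hc; rw [hc] at heq; simp at heq
  have hSpos : 0 < S := lt_of_le_of_ne hS0 (Ne.symm hSne)
  have himpos : 0 < w.im := by
    rcases lt_trichotomy w.im 0 with h | h | h
    · nlinarith
    · rw [h] at heq; simp at heq
    · exact h
  nlinarith [mul_lt_mul_of_pos_right him hSpos]

/-- The topology on `SL(2,ℝ)` induced from the matrix space. -/
instance : TopologicalSpace SL(2, ℝ) :=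
  inferInstanceAs (TopologicalSpace {A : Matrix (Fin 2) (Fin 2) ℝ // A.det = 1})

/-- `Γ_C` is a discrete subgroup of `SL(2,ℝ)`. -/
theorem stmt_10 : DiscreteTopology ΓC := by
  rw [discreteTopology_iff_isOpen_singleton]
  intro γ₀
  set g₀ : SL(2, ℝ) := (γ₀ : SL(2, ℝ)) with hg₀
  set B : Matrix (Fin 2) (Fin 2) ℝ := (↑(g₀⁻¹) : Matrix (Fin 2) (Fin 2) ℝ) with hB
  have hcont : Continuous fun g : SL(2, ℝ) =>
      ((B * (↑g : Matrix (Fin 2) (Fin 2) ℝ)) 1 0) ^ 2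
        + ((B * (↑g : Matrix (Fin 2) (Fin 2) ℝ)) 1 1) ^ 2 := by
    have hcoe : Continuous fun g : SL(2, ℝ) => (↑g : Matrix (Fin 2) (Fin 2) ℝ) :=
      continuous_subtype_val
    have hmul : Continuous fun g : SL(2, ℝ) => B * (↑g : Matrix (Fin 2) (Fin 2) ℝ) :=
      Continuous.matrix_mul continuous_const hcoe
    exact ((hmul.matrix_elem 1 0).pow 2).add ((hmul.matrix_elem 1 1).pow 2)
  have hopen : IsOpen {g : SL(2, ℝ) |
      ((B * (↑g : Matrix (Fin 2) (Fin 2) ℝ)) 1 0) ^ 2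
        + ((B * (↑g : Matrix (Fin 2) (Fin 2) ℝ)) 1 1) ^ 2 < 4} :=
    isOpen_lt hcont continuous_const
  have hkey : ∀ γ : ΓC, (γ : SL(2, ℝ)) ∈ {g : SL(2, ℝ) |
      ((B * (↑g : Matrix (Fin 2) (Fin 2) ℝ)) 1 0) ^ 2
        + ((B * (↑g : Matrix (Fin 2) (Fin 2) ℝ)) 1 1) ^ 2 < 4} ↔ γ = γ₀ := by
    intro γ
    have hBmul : B * (↑(γ : SL(2, ℝ)) : Matrix (Fin 2) (Fin 2) ℝ)
        = (↑(g₀⁻¹ * (γ : SL(2, ℝ))) : Matrix (Fin 2) (Fin 2) ℝ) := by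
      rw [hB]
      rfl
    constructor
    · intro hmem
      simp only [Set.mem_setOf_eq, hBmul] at hmem
      by_contra hne
      have hmemΓ : g₀⁻¹ * (γ : SL(2, ℝ)) ∈ ΓC := mul_mem (inv_mem γ₀.2) γ.2
      have hne1 : g₀⁻¹ * (γ : SL(2, ℝ)) ≠ 1 := by
        intro hc
        apply hne
        have h1 : g₀ = (γ : SL(2, ℝ)) := inv_mul_eq_one.mp hc
        exact Subtype.ext h1.symm
      have h2 : (4:ℝ) ≤ ((↑(g₀⁻¹ * (γ : SL(2, ℝ))) : Matrix (Fin 2) (Fin 2) ℝ) 1 0) ^ 2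
          + ((↑(g₀⁻¹ * (γ : SL(2, ℝ))) : Matrix (Fin 2) (Fin 2) ℝ) 1 1) ^ 2 :=
        key_norm hmemΓ hne1
      linarith
    · rintro rfl
      simp only [Set.mem_setOf_eq, hBmul]
      rw [inv_mul_cancel g₀]
      norm_num [Matrix.SpecialLinearGroup.coe_one]
  have hset : ({γ₀} : Set ΓC) = (fun γ : ΓC => (γ : SL(2, ℝ))) ⁻¹' {g : SL(2, ℝ) |
      ((B * (↑g : Matrix (Fin 2) (Fin 2) ℝ)) 1 0) ^ 2
        + ((B * (↑g : Matrix (Fin 2) (Fin 2) ℝ)) 1 1) ^ 2 < 4} := by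
    ext γ
    simp only [Set.mem_singleton_iff, Set.mem_preimage]
    exact (hkey γ).symm
  rw [hset]
  exact hopen.preimage continuous_subtype_val
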